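/- The function n ↦ A(n), the height of the n-th cyclotomic polynomial, is unbounded: for every M there exists n with A(n) > M. -/

import Mathlib

open Polynomial

noncomputable def cycHeight (f : Polynomial ℤ) : ℕ :=
  f.support.sup fun m => (f.coeff m).natAbs

open Finset in

lemma cluster (t : ℕ) (ht : 1 ≤ t) :
    ∃ k : ℕ, 1 ≤ k ∧ ∃ s : Finset ℕ, s.card = t ∧
      ∀ p ∈ s, p.Prime ∧ 2^k < p ∧ p ≤ 2^(k+1) := by
  by_contra hcon
  push_neg at hcon
  have hb : ∀ k : ℕ, ((Finset.Ioc (2^k) (2^(k+1))).filter Nat.Prime).card ≤ t := by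
    intro k
    rcases Nat.eq_zero_or_pos k with rfl | hk
    · calc ((Finset.Ioc (2^0) (2^(0+1))).filter Nat.Prime).card
          ≤ (Finset.Ioc (2^0) (2^(0+1))).card := Finset.card_filter_le _ _
        _ = 1 := by decide
        _ ≤ t := ht
    · by_contra hlt
      push_neg at hlt
      obtain ⟨s, hs, hcard⟩ := Finset.exists_subset_card_eq (le_of_lt hlt)
      obtain ⟨p, hp, himp⟩ := hcon k hk s hcard
      have := hs hp
      simp only [Finset.mem_filter, Finset.mem_Ioc] at this
      exact absurd (himp this.2 this.1.1) (not_lt.mpr this.1.2)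
  set f : ℕ → ℝ := Set.indicator {p | Nat.Prime p} (fun n : ℕ => (1:ℝ)/n) with hf
  have hnn : ∀ n, 0 ≤ f n := by
    intro n; exact Set.indicator_nonneg (fun p _ => by positivity) _
  have hblock : ∀ k : ℕ, ∑ n ∈ Finset.Ioc (2^k) (2^(k+1)), f n ≤ t * (1/2)^k := by
    intro k
    have h1 : ∑ n ∈ Finset.Ioc (2^k) (2^(k+1)), f n
        = ∑ n ∈ (Finset.Ioc (2^k) (2^(k+1))).filter (fun n => n ∈ {p | Nat.Prime p}),
            (1:ℝ)/(n:ℕ) := by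
      simp only [hf]
      simpa using Finset.sum_indicator_eq_sum_filter (Finset.Ioc (2^k) (2^(k+1)))
        (fun (_ : ℕ) (n : ℕ) => (1:ℝ)/n) (fun _ => {p | Nat.Prime p}) id
    rw [h1]
    calc ∑ n ∈ (Finset.Ioc (2^k) (2^(k+1))).filter (fun n => n ∈ {p | Nat.Prime p}), (1:ℝ)/(n:ℕ)
        ≤ ((Finset.Ioc (2^k) (2^(k+1))).filter (fun n => n ∈ {p | Nat.Prime p})).card • ((1:ℝ)/2^k) := by
          apply Finset.sum_le_card_nsmul
          intro x hx
          simp only [Finset.mem_filter, Finset.mem_Ioc] at hx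
          have hx0 : (2:ℝ)^k ≤ (x:ℝ) := by exact_mod_cast (le_of_lt hx.1.1)
          exact div_le_div_of_nonneg_left one_pos.le (by positivity) hx0
        _ ≤ t • ((1:ℝ)/2^k) := by
          apply smul_le_smul_of_nonneg_right _ (by positivity)
          simpa using hb k
        _ = t * (1/2)^k := by rw [nsmul_eq_mul, div_pow, one_pow]
  have hpart : ∀ N : ℕ, ∑ n ∈ Finset.range N, f n ≤ 2 * t := by
    intro N
    have key : ∀ K : ℕ, ∑ n ∈ Finset.Ioc 1 (2^(K+1)), f n ≤ 2 * t := by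
      intro K
      have hsplit : ∑ n ∈ Finset.Ioc 1 (2^(K+1)), f n
          = ∑ k ∈ Finset.range (K+1), ∑ n ∈ Finset.Ioc (2^k) (2^(k+1)), f n := by
        induction K with
        | zero => norm_num
        | succ K ih =>
          rw [Finset.sum_range_succ, ← ih,
            Finset.sum_Ioc_consecutive f (Nat.one_le_two_pow)
              (Nat.pow_le_pow_right (by norm_num) (by omega))]
      rw [hsplit]
      calc ∑ k ∈ Finset.range (K+1), ∑ n ∈ Finset.Ioc (2^k) (2^(k+1)), f n
          ≤ ∑ k ∈ Finset.range (K+1), (t:ℝ) * (1/2)^k := Finset.sum_le_sum fun k _ => hblock k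
        _ = t * ∑ k ∈ Finset.range (K+1), (1/2:ℝ)^k := by rw [Finset.mul_sum]
        _ ≤ t * 2 := by
            apply mul_le_mul_of_nonneg_left (sum_geometric_two_le _) (by positivity)
        _ = 2 * t := by ring
    have hsub : ∑ n ∈ Finset.range N, f n ≤ ∑ n ∈ Finset.Ioc 1 (2^(N+1)), f n := by
      rw [← Finset.sum_filter_ne_zero (Finset.range N)]
      apply Finset.sum_le_sum_of_subset_of_nonneg
      · intro x hx
        simp only [Finset.mem_filter, Finset.mem_range] at hx
        have hxp : x.Prime := by
          by_contra hnp
          exact hx.2 (Set.indicator_of_notMem hnp _)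
        simp only [Finset.mem_Ioc]
        exact ⟨hxp.one_lt, le_trans (le_of_lt hx.1) (le_trans (Nat.lt_two_pow_self (n := N)).le
          (Nat.pow_le_pow_right (by norm_num) (by omega)))⟩
      · intro i _ _; exact hnn i
    exact hsub.trans (key N)
  exact not_summable_one_div_on_primes (summable_of_sum_range_le hnn hpart)


open Polynomial PowerSeries ArithmeticFunction Finset
open scoped ArithmeticFunction.Moebius

lemma schur_coeff (k : ℕ) (hk : 1 ≤ k) (s : Finset ℕ)
    (hodd : Odd s.card) (h3 : 3 ≤ s.card)
    (hs : ∀ p ∈ s, p.Prime ∧ 2^k < p ∧ p ≤ 2^(k+1)) :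
    ∃ n j : ℕ, ((cyclotomic n ℤ).coeff j).natAbs = s.card - 1 := by
  classical
  set t := s.card with hts
  have hsne : s.Nonempty := Finset.card_pos.mp (by omega)
  set j := s.max' hsne with hj
  have hjs : j ∈ s := s.max'_mem hsne
  set m := j + 1 with hm
  set n := ∏ p ∈ s, p with hn
  have hprime : ∀ p ∈ s, p.Prime := fun p hp => (hs p hp).1
  have hone_not : (1 : ℕ) ∉ s := fun h => (hprime 1 h).one_lt.false
  have hnpos : 0 < n := Finset.prod_pos fun p hp => (hprime p hp).pos
  -- moebius values
  have hμn : μ n = -1 := by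
    rw [hn, isMultiplicative_moebius.map_prod_of_prime s hprime]
    rw [Finset.prod_congr rfl fun p hp => moebius_apply_prime (hprime p hp)]
    rw [Finset.prod_const]
    exact hodd.neg_one_pow
  have hsq : Squarefree n := by
    have := hμn
    by_contra hns
    rw [moebius_eq_zero_of_not_squarefree hns] at this
    exact absurd this (by norm_num)
  have hμq : ∀ p ∈ s, μ (n / p) = 1 := by
    intro p hp
    have hnp : n / p = ∏ q ∈ s.erase p, q := by
      rw [hn, ← Finset.mul_prod_erase s _ hp,
        Nat.mul_div_cancel_left _ (hprime p hp).pos]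
    rw [hnp, isMultiplicative_moebius.map_prod_of_prime _
      (fun q hq => hprime q (Finset.mem_of_mem_erase hq))]
    rw [Finset.prod_congr rfl fun q hq =>
      moebius_apply_prime (hprime q (Finset.mem_of_mem_erase hq))]
    rw [Finset.prod_const, Finset.card_erase_of_mem hp]
    have : Even (t - 1) := Nat.Odd.sub_odd hodd odd_one
    exact this.neg_one_pow
  -- the quotient ring
  set I : Ideal (PowerSeries ℤ) := Ideal.span {(PowerSeries.X : PowerSeries ℤ)^m} with hI
  set π : PowerSeries ℤ →+* (PowerSeries ℤ ⧸ I) := Ideal.Quotient.mk I with hπ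
  have hπX : ∀ e : ℕ, m ≤ e → π (PowerSeries.X ^ e) = 0 := by
    intro e he
    rw [hπ, Ideal.Quotient.eq_zero_iff_mem, hI, Ideal.mem_span_singleton]
    exact pow_dvd_pow _ he
  -- units
  have hΦu : ∀ d : ℕ, IsUnit (π ((cyclotomic d ℤ : ℤ[X]) : PowerSeries ℤ)) := by
    intro d
    apply IsUnit.map
    rw [PowerSeries.isUnit_iff_constantCoeff, ← PowerSeries.coeff_zero_eq_constantCoeff_apply,
      Polynomial.coeff_coe]
    rcases Nat.lt_or_ge d 2 with hd | hd
    · interval_cases d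
      · simp
      · simp [cyclotomic_one]
    · rw [cyclotomic_coeff_zero ℤ (by omega)]; exact isUnit_one
  have hXu : ∀ d : ℕ, 1 ≤ d → IsUnit (π ((PowerSeries.X : PowerSeries ℤ)^d - 1)) := by
    intro d hd
    apply IsUnit.map
    rw [PowerSeries.isUnit_iff_constantCoeff, map_sub, map_pow, map_one,
      PowerSeries.constantCoeff_X, zero_pow (by omega), zero_sub]
    exact isUnit_one.neg
  have hFex : ∀ d : ℕ, ∃ u : (PowerSeries ℤ ⧸ I)ˣ,
      (u : PowerSeries ℤ ⧸ I) = π ((cyclotomic d ℤ : ℤ[X]) : PowerSeries ℤ) :=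
    fun d => ⟨(hΦu d).unit, (hΦu d).unit_spec⟩
  choose F hF using hFex
  have hGex : ∀ d : ℕ, ∃ u : (PowerSeries ℤ ⧸ I)ˣ,
      1 ≤ d → (u : PowerSeries ℤ ⧸ I) = π ((PowerSeries.X : PowerSeries ℤ)^d - 1) := by
    intro d
    rcases Nat.eq_zero_or_pos d with rfl | hd
    · exact ⟨1, by omega⟩
    · exact ⟨(hXu d hd).unit, fun _ => (hXu d hd).unit_spec⟩
  choose G hG using hGex
  -- divisor identity
  have hdiv : ∀ N : ℕ, N > 0 → ∏ d ∈ N.divisors, F d = G N := by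
    intro N hN
    apply Units.ext
    rw [Units.coe_prod]
    rw [Finset.prod_congr rfl fun d _ => hF d, hG N hN]
    have h1 : ∏ d ∈ N.divisors, π ((cyclotomic d ℤ : ℤ[X]) : PowerSeries ℤ)
        = π ((((Polynomial.X : ℤ[X])^N - 1 : ℤ[X]) : PowerSeries ℤ)) := by
      rw [← prod_cyclotomic_eq_X_pow_sub_one hN ℤ]
      simp only [← Polynomial.coeToPowerSeries.ringHom_apply, ← RingHom.comp_apply]
      rw [map_prod]
    rw [h1]
    congr 1
    rw [← Polynomial.coeToPowerSeries.ringHom_apply, map_sub, map_pow, map_one,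
      Polynomial.coeToPowerSeries.ringHom_apply, Polynomial.coe_X]
  -- moebius inversion
  have hinv := (prod_eq_iff_prod_pow_moebius_eq.mp hdiv) n hnpos
  rw [Nat.prod_divisorsAntidiagonal' (f := fun a b => (G b)^(μ a : ℤ))] at hinv
  -- split into small and big divisors
  set small : Finset ℕ := insert 1 s with hsmall
  have hsub : small ⊆ n.divisors := by
    intro e he
    rw [Nat.mem_divisors]
    rcases Finset.mem_insert.mp he with rfl | hes
    · exact ⟨one_dvd _, hnpos.ne'⟩
    · exact ⟨Finset.dvd_prod_of_mem _ hes, hnpos.ne'⟩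
  rw [← Finset.prod_sdiff hsub] at hinv
  -- big divisors are ≥ m
  have hbig : ∀ e ∈ n.divisors \ small, m ≤ e := by
    intro e he
    rw [Finset.mem_sdiff, Nat.mem_divisors] at he
    obtain ⟨⟨hed, -⟩, hens⟩ := he
    have he1 : e ≠ 1 := fun h => hens (by simp [hsmall, h])
    have hes : e ∉ s := fun h => hens (by simp [hsmall, h])
    have hmem : ∀ r : ℕ, r.Prime → r ∣ e → r ∈ s := by
      intro r hr hre
      obtain ⟨q, hq, hrq⟩ := (Prime.dvd_finset_prod_iff hr.prime _).mp (hre.trans hed)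
      rwa [← ((Nat.prime_dvd_prime_iff_eq hr (hprime q hq)).mp hrq)] at hq
    set p := e.minFac with hp
    have hpp : p.Prime := Nat.minFac_prime he1
    have hpe : p ∣ e := Nat.minFac_dvd e
    have hps : p ∈ s := hmem p hpp hpe
    have hesq : Squarefree e := hsq.squarefree_of_dvd hed
    have hpe' : ¬ p ∣ e / p := by
      intro hcon
      obtain ⟨c, hc⟩ := hcon
      have h2 : e / p * p = e := Nat.div_mul_cancel hpe
      have : p * p ∣ e := ⟨c, by rw [← h2, hc]; ring⟩
      exact hpp.not_isUnit (hesq p this)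
    have hep1 : e / p ≠ 1 := by
      intro hcon
      apply hes
      have h2 : e / p * p = e := Nat.div_mul_cancel hpe
      rw [hcon, one_mul] at h2
      rwa [← h2]
    set q := (e / p).minFac with hq
    have hqp : q.Prime := Nat.minFac_prime hep1
    have hqep : q ∣ e / p := Nat.minFac_dvd _
    have hqe : q ∣ e := hqep.trans (Nat.div_dvd_of_dvd hpe)
    have hqs : q ∈ s := hmem q hqp hqe
    have hqnep : q ≠ p := fun h => hpe' (h ▸ hqep)
    have hpq : p * q ∣ e :=
      (Nat.Coprime.mul_dvd_of_dvd_of_dvd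
        ((Nat.coprime_primes hpp hqp).mpr (Ne.symm hqnep)) hpe hqe)
    have hele : p * q ≤ e := Nat.le_of_dvd (Nat.pos_of_dvd_of_pos hed hnpos) hpq
    have hpk : 2^k < p := (hs p hps).2.1
    have hqk : 2^k < q := (hs q hqs).2.1
    have hjk : j ≤ 2^(k+1) := (hs j hjs).2.2
    have h2k : (2:ℕ) ≤ 2^k := by
      calc (2:ℕ) = 2^1 := rfl
      _ ≤ 2^k := Nat.pow_le_pow_right (by norm_num) hk
    have hlt : 2^(k+1) < p * q := by
      calc 2^(k+1) = 2^k * 2 := by rw [pow_succ]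
      _ < p * q := mul_lt_mul'' hpk (by omega) (by omega) (by omega)
    have : 2^(k+1) < e := lt_of_lt_of_le hlt hele
    omega
  -- epsilon is plus/minus one
  set ε : (PowerSeries ℤ ⧸ I)ˣ := ∏ x ∈ n.divisors \ small, G x ^ (μ (n / x) : ℤ) with hε
  have hu2 : ((-1 : (PowerSeries ℤ ⧸ I)ˣ)) * (-1) = 1 := by
    apply Units.ext; simp
  have hneg1 : ∀ z : ℤ, ((-1 : (PowerSeries ℤ ⧸ I)ˣ) ^ z) = 1 ∨
      ((-1 : (PowerSeries ℤ ⧸ I)ˣ) ^ z) = -1 := by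
    intro z
    rcases Int.even_or_odd z with ⟨c, hc⟩ | ⟨c, hc⟩
    · left
      rw [hc, ← two_mul, zpow_mul, zpow_two, hu2, one_zpow]
    · right
      rw [hc, zpow_add, zpow_one, zpow_mul, zpow_two, hu2, one_zpow, one_mul]
  have hεu : ε = 1 ∨ ε = -1 := by
    rw [hε]
    apply Finset.prod_induction _ (fun u => u = 1 ∨ u = -1)
    · rintro a b (rfl|rfl) (rfl|rfl)
      · left; rw [one_mul]
      · right; rw [one_mul]
      · right; rw [mul_one]
      · left; exact hu2
    · left; rfl
    · intro e he
      have hme : m ≤ e := hbig e he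
      have hGe : G e = -1 := by
        apply Units.ext
        rw [hG e (by omega), map_sub, map_one, hπX e hme, zero_sub]
        simp
      rw [hGe]; exact hneg1 _
  -- small product
  have hPsmall : ∏ x ∈ small, G x ^ (μ (n / x) : ℤ) = (G 1)⁻¹ * ∏ p ∈ s, G p := by
    rw [hsmall, Finset.prod_insert hone_not]
    congr 1
    · rw [Nat.div_one, hμn, zpow_neg_one]
    · exact Finset.prod_congr rfl fun p hp => by rw [hμq p hp, zpow_one]
  have hPs : ((∏ p ∈ s, G p : (PowerSeries ℤ ⧸ I)ˣ) : PowerSeries ℤ ⧸ I)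
      = π (∏ p ∈ s, ((PowerSeries.X : PowerSeries ℤ)^p - 1)) := by
    have hmp := map_prod π (fun p => (PowerSeries.X : PowerSeries ℤ)^p - 1) s
    rw [Units.coe_prod, Finset.prod_congr rfl (fun p hp => hG p (hprime p hp).one_lt.le), ← hmp]
  -- value equations
  have e1 : (ε : PowerSeries ℤ ⧸ I) * ↑(∏ x ∈ small, G x ^ (μ (n / x) : ℤ))
      = π ((cyclotomic n ℤ : ℤ[X]) : PowerSeries ℤ) := by
    have h := congrArg Units.val hinv
    rw [Units.val_mul, hF n] at h
    exact h
  have e2 : (↑(∏ x ∈ small, G x ^ (μ (n / x) : ℤ)) : PowerSeries ℤ ⧸ I)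
      = ↑((G 1)⁻¹) * π (∏ p ∈ s, ((PowerSeries.X : PowerSeries ℤ)^p - 1)) := by
    have h := congrArg Units.val hPsmall
    rw [Units.val_mul, hPs] at h
    exact h
  have e3 : π (PowerSeries.X - 1) * (↑((G 1)⁻¹) : PowerSeries ℤ ⧸ I) = 1 := by
    have h := Units.mul_inv (G 1)
    rw [hG 1 le_rfl, pow_one] at h
    exact h
  -- sign in the power series ring
  have hsq1 : ((-1 : PowerSeries ℤ))^2 = 1 := by ring
  have hsign : ((-1 : PowerSeries ℤ))^t = -1 := by
    obtain ⟨c, hc⟩ := hodd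
    rw [hc, pow_add, pow_mul, hsq1, one_pow, pow_one, one_mul]
  -- induction: product of (X^p - 1) mod X^m
  have hind : ∀ u : Finset ℕ, (∀ p ∈ u, 2^k < p) →
      π (∏ p ∈ u, ((PowerSeries.X : PowerSeries ℤ)^p - 1))
        = π ((-1 : PowerSeries ℤ)^u.card * (1 - ∑ p ∈ u, (PowerSeries.X : PowerSeries ℤ)^p)) := by
    intro u
    induction u using Finset.induction_on with
    | empty => simp
    | @insert q u' hq ih =>
      intro hu
      have hu' : ∀ p ∈ u', 2^k < p := fun p hp => hu p (Finset.mem_insert_of_mem hp)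
      have hXq : π ((PowerSeries.X : PowerSeries ℤ)^q * ∑ p ∈ u', PowerSeries.X^p) = 0 := by
        rw [Finset.mul_sum, map_sum]
        apply Finset.sum_eq_zero
        intro p hp
        rw [← pow_add]
        apply hπX
        have h1 : 2^k < q := hu q (Finset.mem_insert_self _ _)
        have h2 : 2^k < p := hu' p hp
        have hjk : j ≤ 2^(k+1) := (hs j hjs).2.2
        have h3 : 2^(k+1) = 2^k + 2^k := by rw [pow_succ]; ring
        omega
      rw [Finset.prod_insert hq, Finset.sum_insert hq, Finset.card_insert_of_notMem hq]
      have hm1 := map_mul π ((PowerSeries.X : PowerSeries ℤ)^q - 1)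
        (∏ p ∈ u', ((PowerSeries.X : PowerSeries ℤ)^p - 1))
      have hm2 := map_mul π ((PowerSeries.X : PowerSeries ℤ)^q - 1)
        ((-1 : PowerSeries ℤ)^u'.card * (1 - ∑ p ∈ u', PowerSeries.X^p))
      have halg : ((PowerSeries.X : PowerSeries ℤ)^q - 1) *
            ((-1 : PowerSeries ℤ)^u'.card * (1 - ∑ p ∈ u', PowerSeries.X^p))
          = (-1 : PowerSeries ℤ)^(u'.card+1) *
              (1 - ((PowerSeries.X : PowerSeries ℤ)^q + ∑ p ∈ u', PowerSeries.X^p))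
            + (-1 : PowerSeries ℤ)^(u'.card+1) *
              ((PowerSeries.X : PowerSeries ℤ)^q * ∑ p ∈ u', PowerSeries.X^p) := by
        ring
      have h5 := congrArg π halg
      have h6 := map_add π
        ((-1 : PowerSeries ℤ)^(u'.card+1) *
          (1 - ((PowerSeries.X : PowerSeries ℤ)^q + ∑ p ∈ u', PowerSeries.X^p)))
        ((-1 : PowerSeries ℤ)^(u'.card+1) *
          ((PowerSeries.X : PowerSeries ℤ)^q * ∑ p ∈ u', PowerSeries.X^p))
      have h7 := map_mul π ((-1 : PowerSeries ℤ)^(u'.card+1))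
        ((PowerSeries.X : PowerSeries ℤ)^q * ∑ p ∈ u', PowerSeries.X^p)
      linear_combination hm1 + π ((PowerSeries.X : PowerSeries ℤ)^q - 1) * (ih hu')
        - hm2 + h5 + h6 + h7 + π ((-1 : PowerSeries ℤ)^(u'.card+1)) * hXq
  have e4 : π (∏ p ∈ s, ((PowerSeries.X : PowerSeries ℤ)^p - 1))
      = π (-((1:PowerSeries ℤ) - ∑ p ∈ s, PowerSeries.X^p)) := by
    rw [hind s (fun p hp => (hs p hp).2.1)]
    congr 1
    rw [← hts, hsign]
    ring
  -- geometric series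
  have hGeo : ((PowerSeries.X : PowerSeries ℤ) - 1) * (-(PowerSeries.mk 1)) = 1 := by
    have h := PowerSeries.mk_one_mul_one_sub_eq_one (S := ℤ)
    calc ((PowerSeries.X : PowerSeries ℤ) - 1) * (-(PowerSeries.mk 1))
        = (PowerSeries.mk 1 : PowerSeries ℤ) * (1 - PowerSeries.X) := by ring
      _ = 1 := h
  have gg : π (PowerSeries.X - 1) * π (-(PowerSeries.mk 1 : PowerSeries ℤ)) = 1 := by
    have cg := congrArg π hGeo
    have mm := map_mul π ((PowerSeries.X : PowerSeries ℤ) - 1) (-(PowerSeries.mk 1))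
    have mo := map_one π
    linear_combination cg - mm + mo
  -- identify the inverse
  have hw : (↑((G 1)⁻¹) : PowerSeries ℤ ⧸ I) = π (-(PowerSeries.mk 1 : PowerSeries ℤ)) := by
    linear_combination π (-(PowerSeries.mk 1 : PowerSeries ℤ)) * e3 - (↑((G 1)⁻¹) : PowerSeries ℤ ⧸ I) * gg
  -- the target power series
  have hTT : (-(PowerSeries.mk 1 : PowerSeries ℤ)) * (-((1:PowerSeries ℤ) - ∑ p ∈ s, PowerSeries.X^p))
      = (PowerSeries.mk 1 : PowerSeries ℤ) * ((1:PowerSeries ℤ) - ∑ p ∈ s, PowerSeries.X^p) := by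
    ring
  have m2 := map_mul π (-(PowerSeries.mk 1 : PowerSeries ℤ))
    (-((1:PowerSeries ℤ) - ∑ p ∈ s, PowerSeries.X^p))
  have tt := congrArg π hTT
  have hTf : π ((cyclotomic n ℤ : ℤ[X]) : PowerSeries ℤ)
      = (ε : PowerSeries ℤ ⧸ I) *
          π ((PowerSeries.mk 1 : PowerSeries ℤ) * ((1:PowerSeries ℤ) - ∑ p ∈ s, PowerSeries.X^p)) := by
    linear_combination -e1 + (ε : PowerSeries ℤ ⧸ I) * e2
      + (ε : PowerSeries ℤ ⧸ I) * π (∏ p ∈ s, ((PowerSeries.X : PowerSeries ℤ)^p - 1)) * hw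
      + (ε : PowerSeries ℤ ⧸ I) * π (-(PowerSeries.mk 1 : PowerSeries ℤ)) * e4
      - (ε : PowerSeries ℤ ⧸ I) * m2
      + (ε : PowerSeries ℤ ⧸ I) * tt
  -- epsilon value
  have hεv : (ε : PowerSeries ℤ ⧸ I) = 1 ∨ (ε : PowerSeries ℤ ⧸ I) = -1 := by
    rcases hεu with h | h
    · left; rw [h, Units.val_one]
    · right; rw [h]; simp
  -- coefficient extraction
  have hcoeff : ∀ a b : PowerSeries ℤ, π a = π b →
      (PowerSeries.coeff j) a = (PowerSeries.coeff j) b := by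
    intro a b hab
    rw [hπ, Ideal.Quotient.eq, hI, Ideal.mem_span_singleton, PowerSeries.X_pow_dvd_iff] at hab
    have h := hab j (by omega)
    rw [map_sub] at h
    linarith
  have hc1 : (PowerSeries.coeff (R := ℤ) j)
      ((PowerSeries.mk 1 : PowerSeries ℤ) * ((1:PowerSeries ℤ) - ∑ p ∈ s, PowerSeries.X^p))
      = 1 - t := by
    rw [mul_sub, mul_one, map_sub, PowerSeries.coeff_mk, Finset.mul_sum, map_sum]
    have h : ∀ p ∈ s, (PowerSeries.coeff (R := ℤ) j)
        ((PowerSeries.mk 1 : PowerSeries ℤ) * PowerSeries.X^p) = 1 := by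
      intro p hp
      rw [PowerSeries.coeff_mul_X_pow' _ p j, if_pos (Finset.le_max' s p hp),
        PowerSeries.coeff_mk]
      rfl
    rw [Finset.sum_congr rfl h, Finset.sum_const, hts]
    simp
  refine ⟨n, j, ?_⟩
  have ht3 : 3 ≤ t := h3
  rcases hεv with h1 | h1
  · have hq : π ((cyclotomic n ℤ : ℤ[X]) : PowerSeries ℤ)
        = π ((PowerSeries.mk 1 : PowerSeries ℤ) * ((1:PowerSeries ℤ) - ∑ p ∈ s, PowerSeries.X^p)) := by
      linear_combination hTf +
        π ((PowerSeries.mk 1 : PowerSeries ℤ) * ((1:PowerSeries ℤ) - ∑ p ∈ s, PowerSeries.X^p)) * h1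
    have h2 := hcoeff _ _ hq
    rw [Polynomial.coeff_coe, hc1] at h2
    rw [h2]
    omega
  · have mnegT := map_neg π
      ((PowerSeries.mk 1 : PowerSeries ℤ) * ((1:PowerSeries ℤ) - ∑ p ∈ s, PowerSeries.X^p))
    have hq : π ((cyclotomic n ℤ : ℤ[X]) : PowerSeries ℤ)
        = π (-((PowerSeries.mk 1 : PowerSeries ℤ) * ((1:PowerSeries ℤ) - ∑ p ∈ s, PowerSeries.X^p))) := by
      linear_combination hTf +
        π ((PowerSeries.mk 1 : PowerSeries ℤ) * ((1:PowerSeries ℤ) - ∑ p ∈ s, PowerSeries.X^p)) * h1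
        - mnegT
    have h2 := hcoeff _ _ hq
    rw [Polynomial.coeff_coe, map_neg, hc1] at h2
    rw [h2]
    omega

theorem stmt5 (M : ℕ) : ∃ n : ℕ, cycHeight (Polynomial.cyclotomic n ℤ) > M := by
  obtain ⟨k, hk, s, hcard, hs⟩ := cluster (2*M+3) (by omega)
  obtain ⟨n, j, hnj⟩ := schur_coeff k hk s
    (by rw [hcard]; exact ⟨M+1, by ring⟩) (by rw [hcard]; omega) hs
  refine ⟨n, ?_⟩
  have hne : (cyclotomic n ℤ).coeff j ≠ 0 := by
    intro h
    rw [h, hcard] at hnj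
    simp at hnj
  have hmem : j ∈ (cyclotomic n ℤ).support := Polynomial.mem_support_iff.mpr hne
  have hle : ((cyclotomic n ℤ).coeff j).natAbs ≤
      (cyclotomic n ℤ).support.sup (fun m => ((cyclotomic n ℤ).coeff m).natAbs) :=
    Finset.le_sup (f := fun m => ((cyclotomic n ℤ).coeff m).natAbs) hmem
  rw [hnj, hcard] at hle
  show (cyclotomic n ℤ).support.sup (fun m => ((cyclotomic n ℤ).coeff m).natAbs) > M
  omega
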